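/- Let n ≥ 3 be an integer and let w ≤ 0 be a real number. Then the following are equivalent: (i) for every t ∈ [−4, 0], cos(2π/n) ≤ −cos( (π(n−2)/n)·√(1 + w·t/4) ) ≤ 1; (ii) w ≥ −8n/(n−2)². -/

import Mathlib

open Real

lemma cos_two_pi_sub' (x : ℝ) : Real.cos (2 * π - x) = Real.cos x := by
  rw [Real.cos_sub, Real.cos_two_pi, Real.sin_two_pi]; ring

lemma lemA {α x : ℝ} (h0 : 0 ≤ α) (_hπ : α ≤ π) (h1 : α ≤ x) (h2 : x ≤ 2 * π - α) :
    Real.cos x ≤ Real.cos α := by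
  rcases le_total x π with h | h
  · exact Real.cos_le_cos_of_nonneg_of_le_pi h0 h h1
  · rw [← cos_two_pi_sub' x]
    exact Real.cos_le_cos_of_nonneg_of_le_pi h0 (by linarith) (by linarith)

lemma lemB {α x : ℝ} (h0 : 0 < α) (hπ : α ≤ π) (h1 : 2 * π - α < x) (h2 : x ≤ 2 * π) :
    Real.cos α < Real.cos x := by
  rw [← cos_two_pi_sub' x]
  exact Real.strictAntiOn_cos ⟨by linarith, by linarith⟩ ⟨h0.le, hπ⟩ (by linarith)

set_option maxHeartbeats 1000000 in
/-- Characterisation of the admissible weights (proof of Theorem 5.1): for `n ≥ 3` and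
`w ≤ 0`, the unitarisability condition
`cos(2π/n) ≤ −cos((π(n−2)/n)√(1 + wt/4)) ≤ 1` holds for every `t ∈ [−4,0]` iff
`w ≥ −8n/(n−2)²`. -/
theorem admissible_weights (n : ℕ) (hn : 3 ≤ n) (w : ℝ) (hw : w ≤ 0) :
    (∀ t ∈ Set.Icc (-4 : ℝ) 0,
        Real.cos (2 * π / n) ≤
            -Real.cos ((π * ((n : ℝ) - 2) / n) * Real.sqrt (1 + w * t / 4)) ∧
          -Real.cos ((π * ((n : ℝ) - 2) / n) * Real.sqrt (1 + w * t / 4)) ≤ 1) ↔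
      -8 * (n : ℝ) / ((n : ℝ) - 2) ^ 2 ≤ w := by
  have hN : (3 : ℝ) ≤ (n : ℝ) := by exact_mod_cast hn
  have hN0 : (0 : ℝ) < n := by linarith
  have h2 : (0 : ℝ) < (n : ℝ) - 2 := by linarith
  have h2sq : (0 : ℝ) < ((n : ℝ) - 2) ^ 2 := by positivity
  obtain ⟨α, hα⟩ : ∃ a : ℝ, a = π * ((n : ℝ) - 2) / n := ⟨_, rfl⟩
  rw [← hα]
  have hαpos : 0 < α := by rw [hα]; exact div_pos (mul_pos Real.pi_pos h2) hN0
  have hαlt : α < π := by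
    rw [hα, div_lt_iff₀ hN0]
    nlinarith [Real.pi_pos]
  have hkey : Real.cos (2 * π / n) = -Real.cos α := by
    have h : 2 * π / n = π - α := by rw [hα]; field_simp; ring
    rw [h, Real.cos_pi_sub]
  have hext : α * (((n : ℝ) + 2) / ((n : ℝ) - 2)) = 2 * π - α := by
    rw [hα]; field_simp; ring
  constructor
  · intro H
    by_contra hcon
    push_neg at hcon
    have h8 : w * ((n : ℝ) - 2) ^ 2 < -8 * n := (lt_div_iff₀ h2sq).mp hcon
    have hwneg : w < 0 := by nlinarith
    have hw0 : w ≠ 0 := hwneg.ne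
    have hgt : (((n : ℝ) + 2) / ((n : ℝ) - 2)) ^ 2 < 1 - w := by
      rw [div_pow, div_lt_iff₀ h2sq]
      nlinarith
    have hsq : (((n : ℝ) + 2) / ((n : ℝ) - 2)) < Real.sqrt (1 - w) := by
      have h1 : ((n : ℝ) + 2) / ((n : ℝ) - 2)
          = Real.sqrt ((((n : ℝ) + 2) / ((n : ℝ) - 2)) ^ 2) := by
        rw [Real.sqrt_sq (by positivity)]
      rw [h1]
      exact Real.sqrt_lt_sqrt (by positivity) hgt
    have hbig : 2 * π - α < α * Real.sqrt (1 - w) := by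
      rw [← hext]
      exact mul_lt_mul_of_pos_left hsq hαpos
    obtain ⟨v, hv⟩ : ∃ a : ℝ, a = min (α * Real.sqrt (1 - w)) (2 * π) := ⟨_, rfl⟩
    have hv1 : 2 * π - α < v := hv ▸ lt_min hbig (by linarith)
    have hv2 : v ≤ 2 * π := hv ▸ min_le_right _ _
    have hv3 : v ≤ α * Real.sqrt (1 - w) := hv ▸ min_le_left _ _
    have hvα : α < v := by linarith
    obtain ⟨s, hs⟩ : ∃ a : ℝ, a = v / α := ⟨_, rfl⟩
    have hs1 : 1 < s := hs ▸ (one_lt_div hαpos).mpr hvα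
    have hs2 : s ≤ Real.sqrt (1 - w) := by
      rw [hs, div_le_iff₀ hαpos]
      calc v ≤ α * Real.sqrt (1 - w) := hv3
        _ = Real.sqrt (1 - w) * α := mul_comm _ _
    have hssq : s ^ 2 ≤ 1 - w := by
      have h := Real.sq_sqrt (by linarith : (0:ℝ) ≤ 1 - w)
      nlinarith [Real.sqrt_nonneg (1 - w)]
    obtain ⟨t, ht⟩ : ∃ a : ℝ, a = 4 * (s ^ 2 - 1) / w := ⟨_, rfl⟩
    have htmem : t ∈ Set.Icc (-4 : ℝ) 0 := by
      constructor
      · rw [ht, le_div_iff_of_neg hwneg]; nlinarith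
      · rw [ht, div_nonpos_iff]
        left
        exact ⟨by nlinarith, hw⟩
    have harg : 1 + w * t / 4 = s ^ 2 := by
      rw [ht]
      field_simp
      ring
    have hsqrt : Real.sqrt (1 + w * t / 4) = s := by
      rw [harg, Real.sqrt_sq (by linarith)]
    have hH := (H t htmem).1
    rw [hsqrt, hkey] at hH
    have hvs : α * s = v := by
      rw [hs, mul_comm, div_mul_cancel₀ _ hαpos.ne']
    have hcos : Real.cos v ≤ Real.cos α := by
      rw [← hvs]; linarith
    exact absurd hcos (not_le.mpr (lemB hαpos hαlt.le hv1 hv2))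
  · intro hb t htmem
    obtain ⟨ht1, ht2⟩ := htmem
    have h8 : -8 * (n : ℝ) ≤ w * ((n : ℝ) - 2) ^ 2 := (div_le_iff₀ h2sq).mp hb
    have hwt : 0 ≤ w * t := by
      have h := mul_nonneg (neg_nonneg.2 hw) (neg_nonneg.2 ht2)
      rw [neg_mul_neg] at h
      exact h
    have hwt4 : w * t ≤ -4 * w := by nlinarith
    have harg1 : 1 ≤ 1 + w * t / 4 := by linarith
    have harg2 : 1 + w * t / 4 ≤ (((n : ℝ) + 2) / ((n : ℝ) - 2)) ^ 2 := by
      rw [div_pow, le_div_iff₀ h2sq]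
      nlinarith
    have hs1 : 1 ≤ Real.sqrt (1 + w * t / 4) := Real.one_le_sqrt.mpr harg1
    have hs2 : Real.sqrt (1 + w * t / 4) ≤ ((n : ℝ) + 2) / ((n : ℝ) - 2) := by
      have h1 : ((n : ℝ) + 2) / ((n : ℝ) - 2)
          = Real.sqrt ((((n : ℝ) + 2) / ((n : ℝ) - 2)) ^ 2) := by
        rw [Real.sqrt_sq (by positivity)]
      rw [h1]
      exact Real.sqrt_le_sqrt harg2
    have hx1 : α ≤ α * Real.sqrt (1 + w * t / 4) := le_mul_of_one_le_right hαpos.le hs1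
    have hx2 : α * Real.sqrt (1 + w * t / 4) ≤ 2 * π - α := by
      rw [← hext]
      exact mul_le_mul_of_nonneg_left hs2 hαpos.le
    have hcos := lemA hαpos.le hαlt.le hx1 hx2
    rw [hkey]
    exact ⟨by linarith, by linarith [Real.neg_one_le_cos (α * Real.sqrt (1 + w * t / 4))]⟩
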